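/- Assume n ≥ 1 and let D : A → A be a k-linear map satisfying the graded Leibniz rule with D(x_i) = x_1 * x_i for all i ∈ Fin n (the differential of the DG polynomial algebra A(1,0,…,0)). Then for every odd natural number d and every f ∈ A homogeneous of degree d, if D f = 0 then f = 0. In particular all odd-degree cohomology of A(1,0,…,0) in positive degrees vanishes. -/

import Mathlib

open MvPolynomial

theorem stmt6_aux (k : Type*) [Field k] [CharZero k] (n : ℕ) (hn : 1 ≤ n)
    (D : MvPolynomial (Fin n) k →ₗ[k] MvPolynomial (Fin n) k)
    (hLeib : ∀ (d : ℕ) (a b : MvPolynomial (Fin n) k), a.IsHomogeneous d →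
      D (a * b) = D a * b + ((-1 : k) ^ d) • (a * D b))
    (hD : ∀ i : Fin n, D (X i) = X ⟨0, hn⟩ * X i) :
    ∀ (d : ℕ) (s : Fin n →₀ ℕ) (c : k), s.degree = d →
      D (monomial s c) = (if Odd d then (1 : k) else 0) • (X ⟨0, hn⟩ * monomial s c) := by
  have h1 : D 1 = 0 := by
    have h := hLeib 0 1 1 (isHomogeneous_one (Fin n) k)
    simp only [mul_one, one_mul, pow_zero, one_smul] at h
    exact (left_eq_add.mp h)
  intro d
  induction d with
  | zero =>
    intro s c hs
    have hs0 : s = 0 := by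
      ext i
      by_contra hi
      have : i ∈ s.support := Finsupp.mem_support_iff.mpr hi
      have := Finset.sum_eq_zero_iff.mp hs i this
      exact hi this
    subst hs0
    rw [show (monomial (0 : Fin n →₀ ℕ) c) = c • (1 : MvPolynomial (Fin n) k) by
      simp [monomial_zero', C_eq_smul_one]]
    rw [map_smul, h1]
    simp
  | succ d ih =>
    intro s c hs
    have hpos : s ≠ 0 := by
      intro h; subst h; simp [Finsupp.degree] at hs
    obtain ⟨i, hi⟩ : ∃ i, s i ≠ 0 := by
      by_contra h
      push_neg at h
      exact hpos (Finsupp.ext fun i => h i)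
    set t := s - Finsupp.single i 1 with ht
    have hle : Finsupp.single i 1 ≤ s := Finsupp.single_le_iff.mpr (Nat.one_le_iff_ne_zero.mpr hi)
    have hst : Finsupp.single i 1 + t = s := by
      rw [ht, add_tsub_cancel_of_le hle]
    have htd : t.degree = d := by
      have h2 : (Finsupp.single i 1 + t).degree = d + 1 := by rw [hst]; exact hs
      rw [Finsupp.degree_eq_weight_one, map_add] at h2
      have h3 : (Finsupp.weight fun _ => 1) (Finsupp.single i (1 : ℕ)) = 1 := by
        simp [Finsupp.weight_apply, Finsupp.sum_single_index]
      rw [Finsupp.degree_eq_weight_one]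
      rw [h3] at h2
      omega
    have hmono : monomial s c = X i * monomial t c := by
      rw [X, monomial_mul, one_mul, hst]
    have hlei := hLeib 1 (X i) (monomial t c) (isHomogeneous_X k i)
    rw [hmono, hlei, hD i, ih t c htd]
    rcases Nat.even_or_odd d with hev | hod
    · have hd1 : Odd (d + 1) := Even.add_one hev
      have hd0 : ¬ Odd d := (Nat.not_odd_iff_even.mpr hev)
      simp only [if_neg hd0, if_pos hd1, zero_smul, smul_zero, one_smul, pow_one,
        neg_smul, mul_zero]
      ring
    · have hd1 : ¬ Odd (d + 1) := by simp [Nat.odd_add_one, Nat.not_even_iff_odd.mpr hod]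
      simp only [if_pos hod, if_neg hd1, one_smul, zero_smul, pow_one, neg_smul]
      ring

/-- For the DG polynomial algebra `A(1,0,…,0)` (so `D (X i) = X 0 * X i`),
every homogeneous cocycle of odd degree is zero. -/
theorem stmt_6 (k : Type*) [Field k] [CharZero k] (n : ℕ) (hn : 1 ≤ n)
    (D : MvPolynomial (Fin n) k →ₗ[k] MvPolynomial (Fin n) k)
    (hLeib : ∀ (d : ℕ) (a b : MvPolynomial (Fin n) k), a.IsHomogeneous d →
      D (a * b) = D a * b + ((-1 : k) ^ d) • (a * D b))
    (hD : ∀ i : Fin n, D (X i) = X ⟨0, hn⟩ * X i) :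
    ∀ d : ℕ, Odd d → ∀ f : MvPolynomial (Fin n) k, f.IsHomogeneous d →
      D f = 0 → f = 0 := by
  intro d hd f hf hDf
  have key : D f = X ⟨0, hn⟩ * f := by
    conv_lhs => rw [f.as_sum]
    rw [map_sum]
    have : ∀ s ∈ f.support, D (monomial s (coeff s f)) =
        X ⟨0, hn⟩ * monomial s (coeff s f) := by
      intro s hs
      have hdeg : s.degree = d := by
        have := hf (Finsupp.mem_support_iff.mp hs)
        rw [Finsupp.degree_eq_weight_one]; exact this
      rw [stmt6_aux k n hn D hLeib hD d s _ hdeg, if_pos hd, one_smul]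
    rw [Finset.sum_congr rfl this, ← Finset.mul_sum, ← f.as_sum]
  rw [hDf] at key
  have := mul_eq_zero.mp key.symm
  rcases this with h | h
  · exact absurd h (X_ne_zero _)
  · exact h
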